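/- arXiv:2602.16280 — 9 statements merged into one kernel-verified Lean document; each statement's English description precedes it below -/
import Mathlib

section
/- Let A, B, W be finite-dimensional real vector spaces, let β : A →ₗ B →ₗ W be a bilinear map, and let γ : A* →ₗ B* →ₗ W* be a bilinear map into the dual of W satisfying the compatibility condition γ e f (β a b) = e a * f b for all a ∈ A, b ∈ B, e ∈ A*, f ∈ B*. Then the induced linear map TensorProduct.lift β : A ⊗[ℝ] B → W is injective; consequently, there exists a subspace C of W such that the range of TensorProduct.lift β and C are complementary subspaces of W (W is their internal direct sum). -/
open TensorProduct

/-- **Lemma 1 of the paper (AB contains A ⊗ B).**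
If `β : A →ₗ B →ₗ W` is the product-state map and `γ : A* →ₗ B* →ₗ W*` the
product-effect map of a composite GPT system, satisfying the compatibility
`γ e f (β a b) = e a * f b`, then the induced map `A ⊗[ℝ] B → W` is injective,
and hence its range has a complementary subspace `C` in `W`. -/
theorem stmt0
    (A B W : Type*)
    [AddCommGroup A] [Module ℝ A] [FiniteDimensional ℝ A]
    [AddCommGroup B] [Module ℝ B] [FiniteDimensional ℝ B]
    [AddCommGroup W] [Module ℝ W] [FiniteDimensional ℝ W]
    (β : A →ₗ[ℝ] B →ₗ[ℝ] W)
    (γ : Module.Dual ℝ A →ₗ[ℝ] Module.Dual ℝ B →ₗ[ℝ] Module.Dual ℝ W)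
    (compat : ∀ (a : A) (b : B) (e : Module.Dual ℝ A) (f : Module.Dual ℝ B),
      γ e f (β a b) = e a * f b) :
    Function.Injective (TensorProduct.lift β) ∧
      ∃ C : Submodule ℝ W, IsCompl (LinearMap.range (TensorProduct.lift β)) C := by
  have key : ∀ (e : Module.Dual ℝ A) (f : Module.Dual ℝ B) (x : A ⊗[ℝ] B),
      γ e f (TensorProduct.lift β x) = TensorProduct.dualDistrib ℝ A B (e ⊗ₜ f) x := by
    intro e f x
    induction x using TensorProduct.induction_on with
    | zero => simp
    | tmul a b => simp [compat, TensorProduct.dualDistrib_apply]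
    | add x y hx hy => simp [map_add, hx, hy]
  have hinj : Function.Injective (TensorProduct.lift β) := by
    rw [← LinearMap.ker_eq_bot, LinearMap.ker_eq_bot']
    intro x hx
    rw [← Module.forall_dual_apply_eq_zero_iff ℝ x]
    intro g
    obtain ⟨y, rfl⟩ := (TensorProduct.dualDistribEquiv ℝ A B).surjective g
    have : ∀ y : Module.Dual ℝ A ⊗[ℝ] Module.Dual ℝ B,
        TensorProduct.dualDistrib ℝ A B y x = 0 := by
      intro y
      induction y using TensorProduct.induction_on with
      | zero => simp
      | tmul e f => rw [← key e f x, hx, map_zero]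
      | add u v hu hv => simp [map_add, LinearMap.add_apply, hu, hv]
    have hy : (TensorProduct.dualDistribEquiv ℝ A B) y = TensorProduct.dualDistrib ℝ A B y := rfl
    rw [hy]; exact this y
  exact ⟨hinj, Submodule.exists_isCompl _⟩
end

section
/- Let A, B, W be finite-dimensional real vector spaces, β : A →ₗ B →ₗ W and γ : A* →ₗ B* →ₗ W* bilinear maps satisfying γ e f (β a b) = e a * f b for all a, b, e, f. Define the holistic-effect subspace H_E := {φ ∈ W* | φ (β a b) = 0 for all a ∈ A, b ∈ B}. Then the induced map TensorProduct.lift γ : A* ⊗[ℝ] B* → W* is injective, and its range and H_E are complementary subspaces of W*: IsCompl (range (TensorProduct.lift γ)) H_E. -/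
open TensorProduct

private lemma key_comp
    (A B W : Type*)
    [AddCommGroup A] [Module ℝ A] [FiniteDimensional ℝ A]
    [AddCommGroup B] [Module ℝ B] [FiniteDimensional ℝ B]
    [AddCommGroup W] [Module ℝ W] [FiniteDimensional ℝ W]
    (β : A →ₗ[ℝ] B →ₗ[ℝ] W)
    (γ : Module.Dual ℝ A →ₗ[ℝ] Module.Dual ℝ B →ₗ[ℝ] Module.Dual ℝ W)
    (compat : ∀ (a : A) (b : B) (e : Module.Dual ℝ A) (f : Module.Dual ℝ B),
      γ e f (β a b) = e a * f b) :
    (TensorProduct.lift β).dualMap ∘ₗ TensorProduct.lift γ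
      = TensorProduct.dualDistrib ℝ A B := by
  apply TensorProduct.ext'
  intro e f
  apply TensorProduct.ext'
  intro a b
  simp [TensorProduct.dualDistrib_apply, compat]

/-- **Lemma 2 of the paper (effects): (AB)* = (AB)*_⊗ ⊕ H_E.**
The induced map `A* ⊗[ℝ] B* → W*` is injective, and its range together with the
holistic-effect subspace `H_E = {φ : W* | φ (β a b) = 0 for all a, b}` are
complementary subspaces of the dual space `W*`. -/
theorem stmt2
    (A B W : Type*)
    [AddCommGroup A] [Module ℝ A] [FiniteDimensional ℝ A]
    [AddCommGroup B] [Module ℝ B] [FiniteDimensional ℝ B]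
    [AddCommGroup W] [Module ℝ W] [FiniteDimensional ℝ W]
    (β : A →ₗ[ℝ] B →ₗ[ℝ] W)
    (γ : Module.Dual ℝ A →ₗ[ℝ] Module.Dual ℝ B →ₗ[ℝ] Module.Dual ℝ W)
    (compat : ∀ (a : A) (b : B) (e : Module.Dual ℝ A) (f : Module.Dual ℝ B),
      γ e f (β a b) = e a * f b) :
    Function.Injective (TensorProduct.lift γ) ∧
      IsCompl (LinearMap.range (TensorProduct.lift γ))
        (⨅ (a : A) (b : B), LinearMap.ker (Module.Dual.eval ℝ W (β a b))) := by
  have hcomp := key_comp A B W β γ compat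
  set L := TensorProduct.lift γ
  set K := (TensorProduct.lift β).dualMap
  have hD : Function.Bijective (TensorProduct.dualDistrib ℝ A B) := by
    have : (TensorProduct.dualDistrib ℝ A B)
        = (TensorProduct.dualDistribEquiv ℝ A B : Module.Dual ℝ A ⊗[ℝ] Module.Dual ℝ B →ₗ[ℝ]
            Module.Dual ℝ (A ⊗[ℝ] B)) := rfl
    rw [this]
    exact (TensorProduct.dualDistribEquiv ℝ A B).bijective
  have hKL : ∀ t, K (L t) = TensorProduct.dualDistrib ℝ A B t := fun t => by
    simpa using LinearMap.congr_fun hcomp t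
  have hLinj : Function.Injective L := by
    intro x y h
    exact hD.injective (by rw [← hKL, ← hKL, h])
  -- characterize H_E as ker K
  have hH : (⨅ (a : A) (b : B), LinearMap.ker (Module.Dual.eval ℝ W (β a b)))
      = LinearMap.ker K := by
    ext φ
    simp only [Submodule.mem_iInf, LinearMap.mem_ker]
    constructor
    · intro h
      apply LinearMap.ext
      intro x
      induction x using TensorProduct.induction_on with
      | zero => simp
      | tmul a b =>
          have := h a b
          simp only [LinearMap.mem_ker, Module.Dual.eval_apply] at this
          simpa [K, LinearMap.dualMap_apply] using this
      | add x y hx hy => simp [map_add, hx, hy]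
    · intro h a b
      have := LinearMap.congr_fun h (a ⊗ₜ[ℝ] b)
      simpa [K, LinearMap.dualMap_apply] using this
  refine ⟨hLinj, ?_⟩
  rw [hH]
  constructor
  · rw [disjoint_iff]
    ext φ
    simp only [Submodule.mem_inf, LinearMap.mem_range, LinearMap.mem_ker,
      Submodule.mem_bot]
    constructor
    · rintro ⟨⟨t, rfl⟩, h⟩
      have : t = 0 := hD.injective (by rw [← hKL]; simpa using h)
      simp [this]
    · rintro rfl
      exact ⟨⟨0, by simp⟩, by simp⟩
  · rw [codisjoint_iff, eq_top_iff]
    intro φ _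
    obtain ⟨t, ht⟩ := hD.surjective (K φ)
    refine Submodule.mem_sup.2 ⟨L t, ⟨t, rfl⟩, φ - L t, ?_, by abel⟩
    simp only [LinearMap.mem_ker, map_sub, hKL t, ht, sub_self]
end

section
/- Let y be the real 2×2 matrix with rows (0, −1) and (1, 0), and let Y₄ := −(y ⊗ₖ y). A real symmetric 4×4 matrix M (indexed by Fin 2 × Fin 2) satisfies trace(M * (E ⊗ₖ F)) = 0 for all real symmetric 2×2 matrices E and F if and only if M = c • Y₄ for some real number c. In particular, the holistic-state subspace of a pair of rebits is the one-dimensional span of σ_y ⊗ σ_y. -/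
open Matrix Kronecker

/-- The real 2×2 matrix representing (−i·σ_y), with rows (0, −1) and (1, 0). -/
noncomputable def y : Matrix (Fin 2) (Fin 2) ℝ := !![0, -1; 1, 0]

/-- The real 4×4 matrix representing σ_y ⊗ σ_y. -/
noncomputable def Y₄ : Matrix (Fin 2 × Fin 2) (Fin 2 × Fin 2) ℝ := -(y ⊗ₖ y)

lemma symmA : (!![(1:ℝ),0;0,0]).IsSymm := by
  ext i j; fin_cases i <;> fin_cases j <;> simp [Matrix.IsSymm]

lemma symmB : (!![(0:ℝ),0;0,1]).IsSymm := by
  ext i j; fin_cases i <;> fin_cases j <;> simp [Matrix.IsSymm]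

lemma symmC : (!![(0:ℝ),1;1,0]).IsSymm := by
  ext i j; fin_cases i <;> fin_cases j <;> simp [Matrix.IsSymm]

/-- **Holistic-state subspace of two rebits (Eq. (42) of the paper).**
A real symmetric 4×4 matrix is annihilated by all product effects
`E ⊗ₖ F` (with `E`, `F` real symmetric 2×2 matrices) if and only if it is a
real multiple of `σ_y ⊗ σ_y`. -/
theorem stmt5 (M : Matrix (Fin 2 × Fin 2) (Fin 2 × Fin 2) ℝ) (hM : M.IsSymm) :
    (∀ E F : Matrix (Fin 2) (Fin 2) ℝ, E.IsSymm → F.IsSymm →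
      (M * (E ⊗ₖ F)).trace = 0) ↔ ∃ c : ℝ, M = c • Y₄ := by
  have hs : ∀ p q, M q p = M p q := fun p q => congrFun (congrFun hM p) q
  constructor
  · intro h
    have hAA := h _ _ symmA symmA
    have hAB := h _ _ symmA symmB
    have hAC := h _ _ symmA symmC
    have hBA := h _ _ symmB symmA
    have hBB := h _ _ symmB symmB
    have hBC := h _ _ symmB symmC
    have hCA := h _ _ symmC symmA
    have hCB := h _ _ symmC symmB
    have hCC := h _ _ symmC symmC
    simp only [Matrix.trace, Matrix.diag, Matrix.mul_apply, Fintype.sum_prod_type,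
      Fin.sum_univ_two, Matrix.kroneckerMap_apply,
      Matrix.cons_val', Matrix.cons_val_zero, Matrix.cons_val_one, Matrix.head_cons,
      Matrix.head_fin_const, Matrix.empty_val', Matrix.cons_val_fin_one, Matrix.of_apply,
      Prod.mk_one_one, Prod.mk_zero_zero, mul_zero, zero_mul, mul_one, one_mul,
      add_zero, zero_add] at hAA hAB hAC hBA hBB hBC hCA hCB hCC
    refine ⟨-M (0,0) (1,1), ?_⟩
    ext ⟨i,j⟩ ⟨k,l⟩
    have s1 := hs (0,0) (0,1)
    have s2 := hs (0,0) (1,0)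
    have s3 := hs (0,0) (1,1)
    have s4 := hs (0,1) (1,0)
    have s5 := hs (0,1) (1,1)
    have s6 := hs (1,0) (1,1)
    simp only [Prod.mk_zero_zero, Prod.mk_one_one] at s1 s2 s3 s4 s5 s6 ⊢
    fin_cases i <;> fin_cases j <;> fin_cases k <;> fin_cases l <;>
      simp only [Fin.mk_zero, Fin.mk_one, Fin.isValue, Prod.mk_zero_zero, Prod.mk_one_one,
        Prod.fst_zero, Prod.snd_zero, Prod.fst_one, Prod.snd_one,
        Y₄, y, Matrix.kroneckerMap_apply, Matrix.smul_apply, Matrix.neg_apply,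
        Matrix.cons_val', Matrix.cons_val_zero, Matrix.cons_val_one, Matrix.head_cons,
        Matrix.head_fin_const, Matrix.empty_val', Matrix.cons_val_fin_one, Matrix.of_apply,
        Prod.mk_one_one, Prod.mk_zero_zero, mul_zero, zero_mul, mul_one, one_mul,
        neg_zero, smul_zero, smul_eq_mul, neg_neg, mul_neg, neg_mul] <;> linarith
  · rintro ⟨c, rfl⟩ E F hE hF
    have hE' : E 1 0 = E 0 1 := congrFun (congrFun hE 0) 1
    have hF' : F 1 0 = F 0 1 := congrFun (congrFun hF 0) 1
    simp only [Matrix.trace, Matrix.diag, Matrix.mul_apply, Fintype.sum_prod_type,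
      Fin.sum_univ_two, Matrix.kroneckerMap_apply,
      Y₄, y, Matrix.smul_apply, Matrix.neg_apply,
      Matrix.cons_val', Matrix.cons_val_zero, Matrix.cons_val_one, Matrix.head_cons,
      Matrix.head_fin_const, Matrix.empty_val', Matrix.cons_val_fin_one, Matrix.of_apply, smul_eq_mul, smul_zero]
    rw [hE', hF']
    ring
end

section
/- Let ρ be a two-rebit state, i.e., a real symmetric positive semidefinite 4×4 matrix of trace 1. Then ρ is real-separable if and only if trace(ρ * Y₄) = 0, where Y₄ := −(y ⊗ₖ y) with y the real 2×2 matrix with rows (0, −1) and (1, 0). Equivalently: a two-rebit state is nonseparable if and only if it has tomographically-nonlocal entanglement (a nonzero σ_y ⊗ σ_y component). -/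
open Matrix Kronecker

/-- A two-rebit state: a real symmetric positive semidefinite 4×4 matrix of trace 1. -/
def IsTwoRebitState (ρ : Matrix (Fin 2 × Fin 2) (Fin 2 × Fin 2) ℝ) : Prop :=
  ρ.IsSymm ∧ ρ.PosSemidef ∧ ρ.trace = 1

/-- Real separability: a convex combination of Kronecker products of real
symmetric positive semidefinite trace-one 2×2 matrices. -/
def RealSeparable (ρ : Matrix (Fin 2 × Fin 2) (Fin 2 × Fin 2) ℝ) : Prop :=
  ∃ (n : ℕ) (p : Fin n → ℝ) (A B : Fin n → Matrix (Fin 2) (Fin 2) ℝ),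
    (∀ k, 0 ≤ p k) ∧ ((∑ k, p k) = 1) ∧
    (∀ k, (A k).IsSymm ∧ (A k).PosSemidef ∧ (A k).trace = 1) ∧
    (∀ k, (B k).IsSymm ∧ (B k).PosSemidef ∧ (B k).trace = 1) ∧
    ρ = ∑ k, p k • (A k ⊗ₖ B k)

/-! ### Auxiliary machinery -/

/-- The quadratic form `w ↦ wᵀ (y ⊗ y) w`. -/
noncomputable def qf (w : Fin 2 × Fin 2 → ℝ) : ℝ := w ⬝ᵥ ((y ⊗ₖ y) *ᵥ w)

lemma qf_eq (w : Fin 2 × Fin 2 → ℝ) :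
    qf w = 2 * (w (0,0) * w (1,1) - w (0,1) * w (1,0)) := by
  simp [qf, dotProduct, mulVec, Fintype.sum_prod_type, Fin.sum_univ_two, kroneckerMap_apply, y]
  ring

lemma trace_vecMulVec_mul {n : Type*} [Fintype n] (u : n → ℝ) (M : Matrix n n ℝ) :
    (vecMulVec u u * M).trace = u ⬝ᵥ (M *ᵥ u) := by
  simp only [Matrix.trace, Matrix.diag, Matrix.mul_apply, vecMulVec_apply, dotProduct, mulVec]
  rw [Finset.sum_comm]
  congr 1; ext i
  rw [Finset.mul_sum]
  congr 1; ext j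
  ring

lemma comp_update_pair {ι : Type*} [DecidableEq ι] {α β : Type*} (F : α → β) (g : ι → α)
    (i j : ι) (X Y : α) :
    (fun k => F (Function.update (Function.update g i X) j Y k)) =
      Function.update (Function.update (fun k => F (g k)) i (F X)) j (F Y) := by
  have h1 : (fun k => F (Function.update g i X k)) =
      Function.update (fun k => F (g k)) i (F X) :=
    funext fun k => Function.apply_update (fun _ => F) g i X k
  have h2 : (fun k => F (Function.update (Function.update g i X) j Y k)) =
      Function.update (fun k => F (Function.update g i X k)) j (F Y) :=
    funext fun k => Function.apply_update (fun _ => F) (Function.update g i X) j Y k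
  rw [h2, h1]

lemma sum_update_pair {n : Type*} [Fintype n] [DecidableEq n] {M : Type*} [AddCommMonoid M]
    (g : n → M) {i j : n} (hij : i ≠ j) (X Y : M) (h : X + Y = g i + g j) :
    ∑ k, Function.update (Function.update g i X) j Y k = ∑ k, g k := by
  have hi : i ∈ Finset.univ \ {j} := by simp [hij]
  rw [Finset.sum_update_of_mem (Finset.mem_univ j), Finset.sum_update_of_mem hi,
    ← Finset.add_sum_erase _ g (Finset.mem_univ j)]
  have he : (Finset.univ \ {j}) \ {i} = (Finset.univ.erase j).erase i := by
    rw [Finset.erase_eq, Finset.erase_eq]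
  rw [he, ← Finset.add_sum_erase _ g (Finset.mem_erase.mpr ⟨hij, Finset.mem_univ i⟩),
    ← add_assoc, ← add_assoc, add_comm Y X, h, add_comm (g i) (g j)]

/-- Key rotation lemma: a family of vectors whose `qf`-values sum to zero can be
rotated (preserving the sum of outer products) so that every vector is `qf`-null. -/
lemma exists_null_decomp (m : ℕ) : ∀ {ι : Type} [Fintype ι] [DecidableEq ι]
    (w : ι → (Fin 2 × Fin 2 → ℝ)),
    (∑ k, qf (w k)) = 0 →
    (Finset.univ.filter fun k => qf (w k) ≠ 0).card ≤ m →
    ∃ v : ι → (Fin 2 × Fin 2 → ℝ),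
      (∀ k, qf (v k) = 0) ∧
      (∑ k, vecMulVec (v k) (v k)) = ∑ k, vecMulVec (w k) (w k) := by
  induction m with
  | zero =>
    intro ι _ _ w hsum hcard
    refine ⟨w, fun k => ?_, rfl⟩
    by_contra hk
    have hmem : k ∈ Finset.univ.filter fun k => qf (w k) ≠ 0 := by
      simp [hk]
    have := (Finset.card_pos.mpr ⟨k, hmem⟩).trans_le hcard
    simp at this
  | succ m IH =>
    intro ι _ _ w hsum hcard
    by_cases hall : ∀ k, qf (w k) = 0
    · exact ⟨w, hall, rfl⟩
    push_neg at hall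
    obtain ⟨k0, hk0⟩ := hall
    have hpos : ∃ i, 0 < qf (w i) := by
      by_contra h
      push_neg at h
      exact hk0 ((Finset.sum_eq_zero_iff_of_nonpos (fun k _ => h k)).mp hsum k0
        (Finset.mem_univ _))
    have hneg : ∃ j, qf (w j) < 0 := by
      by_contra h
      push_neg at h
      exact hk0 ((Finset.sum_eq_zero_iff_of_nonneg (fun k _ => h k)).mp hsum k0
        (Finset.mem_univ _))
    obtain ⟨i, hi⟩ := hpos
    obtain ⟨j, hj⟩ := hneg
    have hij : i ≠ j := by
      rintro rfl
      exact absurd hi (not_lt.mpr hj.le)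
    set u := w i with hu
    set z := w j with hz
    have hcont : Continuous fun θ : ℝ => qf (Real.cos θ • u + Real.sin θ • z) := by
      simp only [qf_eq, Pi.add_apply, Pi.smul_apply, smul_eq_mul]
      fun_prop
    have h2 : (0:ℝ) ∈ Set.Icc (qf (Real.cos (Real.pi/2) • u + Real.sin (Real.pi/2) • z))
        (qf (Real.cos 0 • u + Real.sin 0 • z)) := by
      simp only [Real.cos_pi_div_two, Real.sin_pi_div_two, Real.cos_zero, Real.sin_zero,
        zero_smul, one_smul, zero_add, add_zero]
      exact ⟨hj.le, hi.le⟩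
    obtain ⟨θ, -, hθ⟩ := intermediate_value_Icc' (by positivity : (0:ℝ) ≤ Real.pi/2)
      hcont.continuousOn h2
    set c := Real.cos θ with hc
    set s := Real.sin θ with hs
    have hcs : c^2 + s^2 = 1 := Real.cos_sq_add_sin_sq θ
    set X := c • u + s • z with hX
    set Y := (-s) • u + c • z with hY
    set w' := Function.update (Function.update w i X) j Y with hw'
    have hrotq : qf X + qf Y = qf u + qf z := by
      simp only [hX, hY, qf_eq, Pi.add_apply, Pi.smul_apply, smul_eq_mul]
      linear_combination (2*(u (0,0)*u (1,1) - u (0,1)*u (1,0))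
        + 2*(z (0,0)*z (1,1) - z (0,1)*z (1,0))) * hcs
    have hrotV : vecMulVec X X + vecMulVec Y Y = vecMulVec u u + vecMulVec z z := by
      ext p r
      simp only [hX, hY, Matrix.add_apply, vecMulVec_apply, Pi.add_apply, Pi.smul_apply,
        smul_eq_mul]
      linear_combination (u p * u r + z p * z r) * hcs
    have hq' : ∑ k, qf (w' k) = ∑ k, qf (w k) := by
      show ∑ k, (fun k => qf (w' k)) k = _
      rw [hw', comp_update_pair qf w i j X Y]
      exact sum_update_pair _ hij _ _ hrotq
    have hV' : ∑ k, vecMulVec (w' k) (w' k) = ∑ k, vecMulVec (w k) (w k) := by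
      show ∑ k, (fun k => vecMulVec (w' k) (w' k)) k = _
      rw [hw', comp_update_pair (fun v => vecMulVec v v) w i j X Y]
      exact sum_update_pair _ hij _ _ hrotV
    have hw'i : qf (w' i) = 0 := by
      rw [hw', Function.update_of_ne hij, Function.update_self]
      exact hθ
    have hsub : (Finset.univ.filter fun k => qf (w' k) ≠ 0) ⊆
        (Finset.univ.filter fun k => qf (w k) ≠ 0).erase i := by
      intro k hk
      simp only [Finset.mem_filter, Finset.mem_univ, true_and] at hk
      have hki : k ≠ i := by
        rintro rfl
        exact hk hw'i
      refine Finset.mem_erase.mpr ⟨hki, Finset.mem_filter.mpr ⟨Finset.mem_univ _, ?_⟩⟩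
      by_cases hkj : k = j
      · subst hkj
        exact hj.ne
      · have hwk : w' k = w k := by
          rw [hw', Function.update_of_ne hkj, Function.update_of_ne hki]
        rw [← hwk]
        exact hk
    have hnewcard : (Finset.univ.filter fun k => qf (w' k) ≠ 0).card ≤ m := by
      have h1 := Finset.card_le_card hsub
      have himem : i ∈ Finset.univ.filter fun k => qf (w k) ≠ 0 := by
        exact Finset.mem_filter.mpr ⟨Finset.mem_univ _, hi.ne'⟩
      rw [Finset.card_erase_of_mem himem] at h1
      omega
    obtain ⟨v, hv0, hvs⟩ := IH w' (hq'.trans hsum) hnewcard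
    exact ⟨v, hv0, hvs.trans hV'⟩

lemma prod_of_det {a00 a01 a10 a11 : ℝ} (hd : a00 * a11 = a01 * a10) :
    ∃ a b : Fin 2 → ℝ,
      a00 = a 0 * b 0 ∧ a01 = a 0 * b 1 ∧ a10 = a 1 * b 0 ∧ a11 = a 1 * b 1 := by
  by_cases h0 : a00 = 0
  · by_cases h1 : a10 = 0
    · exact ⟨![a01, a11], ![0, 1], by simp [h0, h1]⟩
    · have h01 : a01 = 0 := by
        have : a01 * a10 = 0 := by rw [← hd, h0]; ring
        exact (mul_eq_zero.mp this).resolve_right h1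
      exact ⟨![0, 1], ![a10, a11], by simp [h0, h01]⟩
  · refine ⟨![a00, a10], ![1, a01 / a00], ?_, ?_, ?_, ?_⟩ <;> simp
    · field_simp
    · field_simp
      linear_combination hd

lemma exists_prod (v : Fin 2 × Fin 2 → ℝ) (h : qf v = 0) :
    ∃ a b : Fin 2 → ℝ, ∀ p, v p = a p.1 * b p.2 := by
  rw [qf_eq] at h
  have hd : v (0,0) * v (1,1) = v (0,1) * v (1,0) := by linarith
  obtain ⟨a, b, e1, e2, e3, e4⟩ := prod_of_det hd
  refine ⟨a, b, ?_⟩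
  rintro ⟨p1, p2⟩
  fin_cases p1 <;> fin_cases p2
  · exact e1
  · exact e2
  · exact e3
  · exact e4

lemma vecMulVec_prod (a b : Fin 2 → ℝ) :
    vecMulVec (fun p : Fin 2 × Fin 2 => a p.1 * b p.2) (fun p => a p.1 * b p.2)
      = (vecMulVec a a) ⊗ₖ (vecMulVec b b) := by
  ext ⟨p1,p2⟩ ⟨q1,q2⟩
  simp [vecMulVec_apply, kroneckerMap_apply]
  ring

lemma isSymm_vecMulVec {n : Type*} (a : n → ℝ) : (vecMulVec a a).IsSymm :=
  Matrix.IsSymm.ext fun i j => by simp [vecMulVec_apply, mul_comm]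

lemma posSemidef_vecMulVec (a : Fin 2 → ℝ) : (vecMulVec a a).PosSemidef := by
  refine posSemidef_iff_dotProduct_mulVec.mpr ⟨?_, ?_⟩
  · ext i j
    simp [conjTranspose_apply, vecMulVec_apply, mul_comm]
  · intro x
    have hx : star x ⬝ᵥ (vecMulVec a a *ᵥ x) = (a ⬝ᵥ x)^2 := by
      simp [dotProduct, mulVec, vecMulVec_apply, Fin.sum_univ_two]
      ring
    rw [hx]
    positivity

lemma trace_vecMulVec {n : Type*} [Fintype n] (a : n → ℝ) :
    (vecMulVec a a).trace = ∑ i, (a i)^2 := by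
  simp [Matrix.trace, Matrix.diag, vecMulVec_apply, sq]

/-- normalized rank-one state -/
noncomputable def nrm (a : Fin 2 → ℝ) : Matrix (Fin 2) (Fin 2) ℝ :=
  if (∑ i, (a i)^2) = 0 then vecMulVec ![1,0] ![1,0]
  else (∑ i, (a i)^2)⁻¹ • vecMulVec a a

lemma sumsq_eq_zero {a : Fin 2 → ℝ} (h : (∑ i, (a i)^2) = 0) : a = 0 := by
  rw [Fin.sum_univ_two] at h
  funext i
  have h0 : a 0 = 0 := by nlinarith [sq_nonneg (a 0), sq_nonneg (a 1)]
  have h1 : a 1 = 0 := by nlinarith [sq_nonneg (a 0), sq_nonneg (a 1)]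
  fin_cases i
  · exact h0
  · exact h1

lemma nrm_props (a : Fin 2 → ℝ) :
    (nrm a).IsSymm ∧ (nrm a).PosSemidef ∧ (nrm a).trace = 1 := by
  unfold nrm
  split_ifs with h
  · refine ⟨isSymm_vecMulVec _, posSemidef_vecMulVec _, ?_⟩
    rw [_root_.trace_vecMulVec]
    norm_num [Fin.sum_univ_two]
  · refine ⟨?_, posSemidef_iff_dotProduct_mulVec.mpr ⟨?_, ?_⟩, ?_⟩
    · rw [Matrix.IsSymm, Matrix.transpose_smul, (isSymm_vecMulVec a).eq]
    · ext i j
      simp [conjTranspose_apply, vecMulVec_apply, mul_comm]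
    · intro x
      rw [Matrix.smul_mulVec, dotProduct_smul]
      have h1 := (posSemidef_vecMulVec a).dotProduct_mulVec_nonneg x
      have h2 : (0:ℝ) ≤ (∑ i, (a i)^2)⁻¹ := by positivity
      simpa using mul_nonneg h2 h1
    · rw [Matrix.trace_smul, _root_.trace_vecMulVec, smul_eq_mul, inv_mul_cancel₀ h]

lemma vecMulVec_eq_smul_nrm (a : Fin 2 → ℝ) :
    vecMulVec a a = (∑ i, (a i)^2) • nrm a := by
  unfold nrm
  split_ifs with h
  · rw [h, zero_smul, sumsq_eq_zero h]
    ext i j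
    simp [vecMulVec_apply]
  · rw [smul_smul, mul_inv_cancel₀ h, one_smul]

lemma trace_mul_y (A : Matrix (Fin 2) (Fin 2) ℝ) (hA : A.IsSymm) : (A * y).trace = 0 := by
  rw [Matrix.trace_fin_two]
  simp [Matrix.mul_apply, Fin.sum_univ_two, y]
  have := hA.apply 0 1
  linarith

/-- **Proposition 6 of the paper.**
A two-rebit state is real-separable if and only if it has no σ_y ⊗ σ_y
component; equivalently, a two-rebit state is nonseparable iff it has
tomographically-nonlocal entanglement. -/
theorem stmt6 (ρ : Matrix (Fin 2 × Fin 2) (Fin 2 × Fin 2) ℝ)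
    (hρ : IsTwoRebitState ρ) :
    RealSeparable ρ ↔ (ρ * Y₄).trace = 0 := by
  obtain ⟨hsym, hpsd, htr⟩ := hρ
  have hY : ∀ σ : Matrix (Fin 2 × Fin 2) (Fin 2 × Fin 2) ℝ,
      (σ * Y₄).trace = -(σ * (y ⊗ₖ y)).trace := by
    intro σ
    rw [Y₄, Matrix.mul_neg, Matrix.trace_neg]
  constructor
  · rintro ⟨n, p, A, B, hp, hps, hA, hB, rfl⟩
    rw [hY, neg_eq_zero, Finset.sum_mul, Matrix.trace_sum]
    refine Finset.sum_eq_zero fun k _ => ?_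
    rw [smul_mul_assoc, Matrix.trace_smul, ← mul_kronecker_mul, trace_kronecker,
      trace_mul_y _ (hA k).1, zero_mul, smul_zero]
  · intro h0
    have h0' : (ρ * (y ⊗ₖ y)).trace = 0 := by
      rw [hY] at h0
      linarith
    open scoped MatrixOrder in obtain ⟨C, hC⟩ := CStarAlgebra.nonneg_iff_eq_star_mul_self.mp hpsd.nonneg
    set w : (Fin 2 × Fin 2) → (Fin 2 × Fin 2 → ℝ) := fun i p => C i p with hwdef
    have hρw : ρ = ∑ i, vecMulVec (w i) (w i) := by
      rw [hC]
      ext p r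
      simp [Matrix.mul_apply, Matrix.sum_apply, star_eq_conjTranspose, conjTranspose_apply, vecMulVec_apply, hwdef]
    have hqsum : ∑ i, qf (w i) = 0 := by
      have : (ρ * (y ⊗ₖ y)).trace = ∑ i, qf (w i) := by
        rw [hρw, Finset.sum_mul, Matrix.trace_sum]
        exact Finset.sum_congr rfl fun i _ => trace_vecMulVec_mul (w i) _
      rw [← this]
      exact h0'
    obtain ⟨v, hv0, hvs⟩ := exists_null_decomp
      ((Finset.univ.filter fun k => qf (w k) ≠ 0).card) w hqsum le_rfl
    have hρv : ρ = ∑ i, vecMulVec (v i) (v i) := by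
      rw [hρw, ← hvs]
    choose a b hab using fun k => exists_prod (v k) (hv0 k)
    set P : Fin 2 × Fin 2 → ℝ := fun k => (∑ i, (a k i)^2) * (∑ i, (b k i)^2) with hPdef
    have key : ∀ k, vecMulVec (v k) (v k) = P k • (nrm (a k) ⊗ₖ nrm (b k)) := by
      intro k
      have hvk : v k = fun p => a k p.1 * b k p.2 := funext (hab k)
      rw [hvk, vecMulVec_prod, vecMulVec_eq_smul_nrm (a k), vecMulVec_eq_smul_nrm (b k),
        smul_kronecker, kronecker_smul, smul_smul]
    have tracekey : ∀ k, (vecMulVec (v k) (v k)).trace = P k := by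
      intro k
      rw [key k, Matrix.trace_smul, trace_kronecker, (nrm_props (a k)).2.2,
        (nrm_props (b k)).2.2]
      simp
    have hPsum : ∑ k, P k = 1 := by
      have : ∑ k, P k = ρ.trace := by
        rw [hρv, Matrix.trace_sum]
        exact (Finset.sum_congr rfl fun k _ => (tracekey k)).symm
      rw [this, htr]
    set e := Fintype.equivFin (Fin 2 × Fin 2) with hedef
    refine ⟨Fintype.card (Fin 2 × Fin 2), fun k => P (e.symm k),
      fun k => nrm (a (e.symm k)), fun k => nrm (b (e.symm k)),
      fun k => ?_, ?_, fun k => nrm_props _, fun k => nrm_props _, ?_⟩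
    · rw [hPdef]
      positivity
    · rw [Equiv.sum_comp e.symm P]
      exact hPsum
    · rw [hρv, ← Equiv.sum_comp e.symm (fun k => vecMulVec (v k) (v k))]
      exact Finset.sum_congr rfl fun k _ => key (e.symm k)
end

section
/- Let X be the real 2×2 matrix with rows (0,1),(1,0) and Z := diag(1,−1), and define the Bell state ρ_Φ := (1/4)(I₄ + X ⊗ₖ X + Z ⊗ₖ Z − Y₄). Then: (a) ρ_Φ is a two-rebit state (real symmetric positive semidefinite with trace 1); (b) trace(ρ_Φ * Y₄) = −1 ≠ 0, so ρ_Φ has tomographically-nonlocal entanglement; and (c) Π_TL(ρ_Φ) = (1/4)(I₄ + X ⊗ₖ X + Z ⊗ₖ Z) is not positive semidefinite and hence not real-separable, so ρ_Φ also has tomographically-local entanglement. -/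
open Matrix Kronecker

/-- The tomographically local projection Π_TL on two-rebit matrices. -/
noncomputable def PiTL (ρ : Matrix (Fin 2 × Fin 2) (Fin 2 × Fin 2) ℝ) :
    Matrix (Fin 2 × Fin 2) (Fin 2 × Fin 2) ℝ :=
  ρ - ((1 / 4 : ℝ) * (ρ * Y₄).trace) • Y₄

/-- The Pauli X matrix over ℝ. -/
noncomputable def Xm : Matrix (Fin 2) (Fin 2) ℝ := !![0, 1; 1, 0]

/-- The Pauli Z matrix over ℝ. -/
noncomputable def Zm : Matrix (Fin 2) (Fin 2) ℝ := !![1, 0; 0, -1]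

/-- The Bell state Φ⁺ as a two-rebit density matrix. -/
noncomputable def ρΦ : Matrix (Fin 2 × Fin 2) (Fin 2 × Fin 2) ℝ :=
  (1 / 4 : ℝ) • ((1 : Matrix (Fin 2 × Fin 2) (Fin 2 × Fin 2) ℝ)
    + Xm ⊗ₖ Xm + Zm ⊗ₖ Zm - Y₄)


private lemma hsymm' : ρΦ.IsSymm := by
  ext ⟨i,j⟩ ⟨k,l⟩
  fin_cases i <;> fin_cases j <;> fin_cases k <;> fin_cases l <;>
    simp [ρΦ, Y₄, Xm, Zm, y, Matrix.one_apply, Prod.ext_iff] <;> norm_num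

private lemma hquad' : ∀ x, 0 ≤ star x ⬝ᵥ ρΦ *ᵥ x := by
  intro x
  simp only [ρΦ, Y₄, Xm, Zm, y, dotProduct, mulVec, Fintype.sum_prod_type,
    Fin.sum_univ_succ, Fin.sum_univ_zero, star_apply]
  norm_num [Matrix.one_apply, Prod.ext_iff]
  nlinarith [sq_nonneg (x (0,0) + x (1,1))]

private lemma htrY' : (ρΦ * Y₄).trace = -1 := by
  simp [ρΦ, Y₄, Xm, Zm, y, Matrix.trace, Matrix.mul_apply, Fin.sum_univ_succ,
    Matrix.one_apply, Fintype.sum_prod_type]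
  norm_num

private lemma htr1' : ρΦ.trace = 1 := by
  simp [ρΦ, Y₄, Xm, Zm, y, Matrix.trace, Fin.sum_univ_succ,
    Matrix.one_apply, Fintype.sum_prod_type]
  norm_num

private lemma hPi' : PiTL ρΦ = (1 / 4 : ℝ) • ((1 : Matrix (Fin 2 × Fin 2) (Fin 2 × Fin 2) ℝ)
      + Xm ⊗ₖ Xm + Zm ⊗ₖ Zm) := by
  rw [PiTL, htrY', ρΦ]
  module

private lemma hnpsd' : ¬ (PiTL ρΦ).PosSemidef := by
  rw [hPi']
  intro h
  have := h.dotProduct_mulVec_nonneg (fun p : Fin 2 × Fin 2 => if p = (0,1) then (1:ℝ) else if p = (1,0) then -1 else 0)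
  simp only [dotProduct, mulVec, Fintype.sum_prod_type, Fin.sum_univ_succ,
    Fin.sum_univ_zero, star_apply, Xm, Zm, Matrix.smul_apply, Matrix.add_apply, one_apply,
    kroneckerMap_apply] at this
  norm_num [Prod.ext_iff] at this

private lemma psd_smul' {n : Type*} [Fintype n] {M : Matrix n n ℝ} (h : M.PosSemidef) {c : ℝ}
    (hc : 0 ≤ c) : (c • M).PosSemidef := by
  refine .of_dotProduct_mulVec_nonneg ?_ fun x => ?_
  · show _ᴴ = _
    rw [Matrix.conjTranspose_smul, h.1]
    simp
  · have := h.dotProduct_mulVec_nonneg x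
    simp only [smul_mulVec, dotProduct_smul, smul_eq_mul]
    positivity

private lemma psd_kron' {A B : Matrix (Fin 2) (Fin 2) ℝ} (hA : A.PosSemidef)
    (hB : B.PosSemidef) : (A ⊗ₖ B).PosSemidef := by
  exact hA.kronecker hB

private lemma psd_sum' {n : Type*} [Fintype n] {m : ℕ} (f : Fin m → Matrix n n ℝ)
    (hf : ∀ k, (f k).PosSemidef) : (∑ k, f k).PosSemidef := by
  refine .of_dotProduct_mulVec_nonneg ?_ fun x => ?_
  · simp only [Matrix.IsHermitian, Matrix.conjTranspose_sum]
    exact Finset.sum_congr rfl fun k _ => (hf k).1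
  · have hx : (∑ k, f k) *ᵥ x = ∑ k, (f k) *ᵥ x :=
      map_sum (AddMonoidHom.mk' (fun M => M *ᵥ x) fun A B => Matrix.add_mulVec A B x) f Finset.univ
    have hd : star x ⬝ᵥ (∑ k, (f k) *ᵥ x) = ∑ k, star x ⬝ᵥ ((f k) *ᵥ x) :=
      map_sum (AddMonoidHom.mk' (fun v => star x ⬝ᵥ v)
        fun a b => dotProduct_add (star x) a b) _ Finset.univ
    rw [hx, hd]
    exact Finset.sum_nonneg fun k _ => (hf k).dotProduct_mulVec_nonneg x

/-- **The Bell state has both kinds of entanglement.**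
(a) ρ_Φ is a two-rebit state; (b) its σ_y ⊗ σ_y component is −1 ≠ 0, so it has
tomographically-nonlocal entanglement; (c) its tomographically-local projection
is (1/4)(I₄ + X⊗X + Z⊗Z), which is not positive semidefinite and not
real-separable, so ρ_Φ also has tomographically-local entanglement. -/
theorem stmt10 :
    IsTwoRebitState ρΦ ∧
    ((ρΦ * Y₄).trace = -1 ∧ (ρΦ * Y₄).trace ≠ 0) ∧
    PiTL ρΦ = (1 / 4 : ℝ) • ((1 : Matrix (Fin 2 × Fin 2) (Fin 2 × Fin 2) ℝ)
      + Xm ⊗ₖ Xm + Zm ⊗ₖ Zm) ∧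
    ¬ (PiTL ρΦ).PosSemidef ∧
    ¬ RealSeparable (PiTL ρΦ) := by
  refine ⟨⟨hsymm', .of_dotProduct_mulVec_nonneg hsymm' hquad', htr1'⟩, ⟨htrY', by rw [htrY']; norm_num⟩, hPi', hnpsd', ?_⟩
  rintro ⟨n, p, A, B, hp, -, hA, hB, heq⟩
  apply hnpsd'
  rw [heq]
  exact psd_sum' _ fun k => psd_smul' (psd_kron' (hA k).2.1 (hB k).2.1) (hp k)
end

section
/- Let ρ be a two-rebit state lacking tomographically-local entanglement, i.e., suppose Π_TL(ρ) = Σ_{k} p_k • (A_k ⊗ₖ B_k) for some n : ℕ, weights p_k ≥ 0 with Σ p_k = 1, and real symmetric positive semidefinite trace-one 2×2 matrices A_k, B_k. Then for all real symmetric 2×2 matrices E and F, trace(ρ * (E ⊗ₖ F)) = Σ_k p_k · trace(A_k * E) · trace(B_k * F). Consequently, for arbitrary local real measurements, the resulting correlations admit a local hidden variable model, so ρ cannot violate any Bell inequality. -/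
open Matrix Kronecker

lemma trace_y_mul_symm (E : Matrix (Fin 2) (Fin 2) ℝ) (hE : E.IsSymm) :
    (y * E).trace = 0 := by
  have h : E 1 0 = E 0 1 := by
    have := congrFun (congrFun hE 0) 1
    simpa [Matrix.IsSymm, Matrix.transpose_apply] using this
  simp [Matrix.trace, Matrix.mul_apply, y, Fin.sum_univ_two, Matrix.diag, h]

/-- **Proposition 9 of the paper (in real quantum theory):
tomographically-nonlocal entanglement is useless for Bell nonlocality.**
If the tomographically-local projection of a two-rebit state is separable,
then its correlations under arbitrary product effects factorize through a
local hidden variable model. -/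
theorem stmt11 (ρ : Matrix (Fin 2 × Fin 2) (Fin 2 × Fin 2) ℝ)
    (hρ : IsTwoRebitState ρ)
    (n : ℕ) (p : Fin n → ℝ) (A B : Fin n → Matrix (Fin 2) (Fin 2) ℝ)
    (hp : ∀ k, 0 ≤ p k) (hps : (∑ k, p k) = 1)
    (hA : ∀ k, (A k).IsSymm ∧ (A k).PosSemidef ∧ (A k).trace = 1)
    (hB : ∀ k, (B k).IsSymm ∧ (B k).PosSemidef ∧ (B k).trace = 1)
    (hdec : PiTL ρ = ∑ k, p k • (A k ⊗ₖ B k)) :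
    ∀ E F : Matrix (Fin 2) (Fin 2) ℝ, E.IsSymm → F.IsSymm →
      (ρ * (E ⊗ₖ F)).trace = ∑ k, p k * (A k * E).trace * (B k * F).trace := by
  intro E F hE hF
  have hρeq : ρ = (∑ k, p k • (A k ⊗ₖ B k)) + ((1 / 4 : ℝ) * (ρ * Y₄).trace) • Y₄ := by
    rw [← hdec, PiTL]; ring_nf; abel
  have hY : (Y₄ * (E ⊗ₖ F)).trace = 0 := by
    have : (y ⊗ₖ y) * (E ⊗ₖ F) = (y * E) ⊗ₖ (y * F) := by
      rw [Matrix.mul_kronecker_mul]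
    rw [Y₄, Matrix.neg_mul, Matrix.trace_neg, this, Matrix.trace_kronecker,
      trace_y_mul_symm E hE, zero_mul, neg_zero]
  conv_lhs => rw [hρeq]
  rw [Matrix.add_mul, Matrix.trace_add, Matrix.smul_mul, Matrix.trace_smul, hY,
    smul_zero, add_zero, Matrix.sum_mul, Matrix.trace_sum]
  refine Finset.sum_congr rfl fun k _ => ?_
  rw [Matrix.smul_mul, Matrix.trace_smul, ← Matrix.mul_kronecker_mul,
    Matrix.trace_kronecker, smul_eq_mul, mul_assoc]
end

section
/- Let ρ be a two-rebit state with a separable tomographically-local projection: Π_TL(ρ) = Σ_k p_k • (A_k ⊗ₖ B_k) with weights p_k ≥ 0 summing to 1 and real symmetric positive semidefinite trace-one 2×2 matrices A_k, B_k. For a 4×4 matrix M indexed by Fin 2 × Fin 2, let Tr_A(M) denote the 2×2 matrix with entries (Tr_A M)_{j j'} = Σ_i M_{(i,j),(i,j')}. Then for every real symmetric 2×2 matrix E, the conditional state of the second rebit admits a local-hidden-state decomposition: Tr_A((E ⊗ₖ I₂) * ρ) = Σ_k p_k · trace(A_k * E) • B_k. Hence ρ is useless for steering. -/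
open Matrix Kronecker

/-- Partial trace over the first rebit: (Tr_A M)_{j j'} = Σ_i M_{(i,j),(i,j')}. -/
noncomputable def trA (M : Matrix (Fin 2 × Fin 2) (Fin 2 × Fin 2) ℝ) :
    Matrix (Fin 2) (Fin 2) ℝ :=
  Matrix.of fun j j' => ∑ i : Fin 2, M (i, j) (i, j')


lemma trA_add (M N : Matrix (Fin 2 × Fin 2) (Fin 2 × Fin 2) ℝ) :
    trA (M + N) = trA M + trA N := by
  ext j j'; simp [trA, Finset.sum_add_distrib]

lemma trA_smul (r : ℝ) (M : Matrix (Fin 2 × Fin 2) (Fin 2 × Fin 2) ℝ) :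
    trA (r • M) = r • trA M := by
  ext j j'; simp [trA, Finset.mul_sum]; ring

lemma trA_neg (M : Matrix (Fin 2 × Fin 2) (Fin 2 × Fin 2) ℝ) :
    trA (-M) = -trA M := by
  ext j j'; simp [trA]

lemma trA_sum {n : ℕ} (f : Fin n → Matrix (Fin 2 × Fin 2) (Fin 2 × Fin 2) ℝ) :
    trA (∑ k, f k) = ∑ k, trA (f k) := by
  ext j j'
  simp only [trA, Matrix.of_apply, Matrix.sum_apply]
  exact Finset.sum_comm

lemma trA_kron (M N : Matrix (Fin 2) (Fin 2) ℝ) :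
    trA (M ⊗ₖ N) = M.trace • N := by
  ext j j'
  simp [trA, Matrix.trace, Matrix.diag, Finset.sum_mul, Fin.sum_univ_two]; ring

lemma trace_symm_mul_y (E : Matrix (Fin 2) (Fin 2) ℝ) (hE : E.IsSymm) :
    (E * y).trace = 0 := by
  have h : E 1 0 = E 0 1 := (hE.apply 1 0).symm
  simp [Matrix.trace, Matrix.diag, Matrix.mul_apply, Fin.sum_univ_two, y, h]

/-- **Proposition 10 of the paper (in real quantum theory):
tomographically-nonlocal entanglement is useless for steering.**
If the tomographically-local projection of a two-rebit state is separable,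
then the conditional states on the second rebit obtained by measuring any
local effect `E` on the first rebit admit a local-hidden-state decomposition. -/

theorem stmt12 (ρ : Matrix (Fin 2 × Fin 2) (Fin 2 × Fin 2) ℝ)
    (hρ : IsTwoRebitState ρ)
    (n : ℕ) (p : Fin n → ℝ) (A B : Fin n → Matrix (Fin 2) (Fin 2) ℝ)
    (hp : ∀ k, 0 ≤ p k) (hps : (∑ k, p k) = 1)
    (hA : ∀ k, (A k).IsSymm ∧ (A k).PosSemidef ∧ (A k).trace = 1)
    (hB : ∀ k, (B k).IsSymm ∧ (B k).PosSemidef ∧ (B k).trace = 1)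
    (hdec : PiTL ρ = ∑ k, p k • (A k ⊗ₖ B k)) :
    ∀ E : Matrix (Fin 2) (Fin 2) ℝ, E.IsSymm →
      trA ((E ⊗ₖ (1 : Matrix (Fin 2) (Fin 2) ℝ)) * ρ)
        = ∑ k, (p k * (A k * E).trace) • B k := by
  intro E hE
  have hρ' : ρ = (∑ k, p k • (A k ⊗ₖ B k)) + ((1 / 4 : ℝ) * (ρ * Y₄).trace) • Y₄ := by
    rw [← hdec]; simp [PiTL]
  have hY : trA ((E ⊗ₖ (1 : Matrix (Fin 2) (Fin 2) ℝ)) * Y₄) = 0 := by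
    have : (E ⊗ₖ (1 : Matrix (Fin 2) (Fin 2) ℝ)) * Y₄ = -((E * y) ⊗ₖ ((1 : Matrix (Fin 2) (Fin 2) ℝ) * y)) := by
      rw [Y₄, Matrix.mul_neg, ← Matrix.mul_kronecker_mul]
    rw [this, trA_neg, trA_kron, Matrix.one_mul, trace_symm_mul_y E hE]
    simp
  calc trA ((E ⊗ₖ (1 : Matrix (Fin 2) (Fin 2) ℝ)) * ρ)
      = trA ((E ⊗ₖ (1 : Matrix (Fin 2) (Fin 2) ℝ)) * (∑ k, p k • (A k ⊗ₖ B k)))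
        + ((1 / 4 : ℝ) * (ρ * Y₄).trace) • trA ((E ⊗ₖ (1 : Matrix (Fin 2) (Fin 2) ℝ)) * Y₄) := by
        conv_lhs => rw [hρ']
        rw [Matrix.mul_add, trA_add, Matrix.mul_smul, trA_smul]
    _ = ∑ k, (p k * (A k * E).trace) • B k := by
        rw [hY, smul_zero, add_zero, Finset.mul_sum, trA_sum]
        refine Finset.sum_congr rfl fun k _ => ?_
        rw [Matrix.mul_smul, trA_smul, ← Matrix.mul_kronecker_mul, trA_kron, Matrix.one_mul, smul_smul, Matrix.trace_mul_comm]
end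

section
/- Let ρ be a two-rebit state with Π_TL(ρ) = Σ_k p_k • (A_k ⊗ₖ B_k), with p_k ≥ 0 summing to 1 and real symmetric positive semidefinite trace-one 2×2 matrices A_k, B_k. Let e be any real symmetric 4×4 matrix (a joint effect on the input system S and the first rebit A). For an 8×8 matrix N indexed by (Fin 2 × Fin 2) × Fin 2, write Tr_{SA}(N) for the 2×2 matrix with entries Σ_{s,a} N_{((s,a),b),((s,a),b')}. Then for every real symmetric 2×2 matrix ψ, Tr_{SA}((e ⊗ₖ I₂) * R(ψ ⊗ₖ ρ)) = Σ_k p_k · trace(e * (ψ ⊗ₖ A_k)) • B_k, where R reindexes ψ ⊗ₖ ρ from index type Fin 2 × (Fin 2 × Fin 2) to (Fin 2 × Fin 2) × Fin 2 along the product associator. In particular, the teleportage induced by ρ is a measure-and-prepare map, so ρ is useless for teleportation. -/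
open Matrix Kronecker

/-- Partial trace over the first two tensor factors (the systems S and A):
(Tr_{SA} N)_{b b'} = Σ_{s,a} N_{((s,a),b),((s,a),b')}. -/
noncomputable def trSA
    (N : Matrix ((Fin 2 × Fin 2) × Fin 2) ((Fin 2 × Fin 2) × Fin 2) ℝ) :
    Matrix (Fin 2) (Fin 2) ℝ :=
  Matrix.of fun b b' => ∑ sa : Fin 2 × Fin 2, N (sa, b) (sa, b')

/-- Reindexing of ψ ⊗ₖ ρ from index type Fin 2 × (Fin 2 × Fin 2)
to (Fin 2 × Fin 2) × Fin 2 along the product associator. -/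
noncomputable def assocReindex
    (N : Matrix (Fin 2 × (Fin 2 × Fin 2)) (Fin 2 × (Fin 2 × Fin 2)) ℝ) :
    Matrix ((Fin 2 × Fin 2) × Fin 2) ((Fin 2 × Fin 2) × Fin 2) ℝ :=
  Matrix.reindex (Equiv.prodAssoc (Fin 2) (Fin 2) (Fin 2)).symm
    (Equiv.prodAssoc (Fin 2) (Fin 2) (Fin 2)).symm N

lemma entry_formula (e : Matrix (Fin 2 × Fin 2) (Fin 2 × Fin 2) ℝ)
    (ψ : Matrix (Fin 2) (Fin 2) ℝ) (M : Matrix (Fin 2 × Fin 2) (Fin 2 × Fin 2) ℝ)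
    (b b' : Fin 2) :
    trSA ((e ⊗ₖ (1 : Matrix (Fin 2) (Fin 2) ℝ)) * assocReindex (ψ ⊗ₖ M)) b b'
      = ∑ s : Fin 2, ∑ a : Fin 2, ∑ t : Fin 2 × Fin 2,
          e (s, a) t * (ψ t.1 s * M (t.2, b) (a, b')) := by
  simp [trSA, assocReindex, Matrix.mul_apply, Matrix.one_apply,
    Fintype.sum_prod_type, Matrix.kroneckerMap_apply, Finset.sum_ite_eq,
    mul_comm, mul_left_comm, mul_assoc]

lemma y_term (e : Matrix (Fin 2 × Fin 2) (Fin 2 × Fin 2) ℝ) (he : e.IsSymm)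
    (ψ : Matrix (Fin 2) (Fin 2) ℝ) (hψ : ψ.IsSymm) :
    trSA ((e ⊗ₖ (1 : Matrix (Fin 2) (Fin 2) ℝ)) * assocReindex (ψ ⊗ₖ Y₄)) = 0 := by
  ext b b'
  rw [entry_formula]
  simp only [Y₄, y, Matrix.neg_apply, Matrix.kroneckerMap_apply,
    Fintype.sum_prod_type, Fin.sum_univ_two]
  have h1 : e 0 (0,1) = e (0,1) 0 := he.apply _ _
  have h3 : e (1,0) 1 = e 1 (1,0) := he.apply _ _
  have hs : ψ 1 0 = ψ 0 1 := hψ.apply _ _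
  have hE : e 0 1 = e 1 0 := he.apply _ _
  have hE2 : e (1,0) (0,1) = e (0,1) (1,0) := he.apply _ _
  fin_cases b <;> fin_cases b' <;>
    simp [Matrix.cons_val_zero, Matrix.cons_val_one] <;>
    first
    | linear_combination ψ 0 0 * h1 + ψ 1 1 * h3 + (e 0 1 - e (0,1) (1,0)) * hs
        + ψ 0 1 * hE + ψ 0 1 * hE2
    | linear_combination -(ψ 0 0 * h1 + ψ 1 1 * h3 + (e 0 1 - e (0,1) (1,0)) * hs
        + ψ 0 1 * hE + ψ 0 1 * hE2)

lemma sep_term (e : Matrix (Fin 2 × Fin 2) (Fin 2 × Fin 2) ℝ)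
    (ψ A B : Matrix (Fin 2) (Fin 2) ℝ) :
    trSA ((e ⊗ₖ (1 : Matrix (Fin 2) (Fin 2) ℝ)) * assocReindex (ψ ⊗ₖ (A ⊗ₖ B)))
      = (e * (ψ ⊗ₖ A)).trace • B := by
  ext b b'
  rw [entry_formula]
  simp only [Matrix.smul_apply, Matrix.trace, Matrix.diag, Matrix.mul_apply,
    Matrix.kroneckerMap_apply, Fintype.sum_prod_type, smul_eq_mul,
    Finset.sum_mul, Finset.mul_sum]
  apply Finset.sum_congr rfl; intro s _
  apply Finset.sum_congr rfl; intro a _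
  apply Finset.sum_congr rfl; intro s' _
  apply Finset.sum_congr rfl; intro a' _
  ring

noncomputable def fmap (e : Matrix (Fin 2 × Fin 2) (Fin 2 × Fin 2) ℝ)
    (ψ : Matrix (Fin 2) (Fin 2) ℝ) :
    Matrix (Fin 2 × Fin 2) (Fin 2 × Fin 2) ℝ →ₗ[ℝ] Matrix (Fin 2) (Fin 2) ℝ where
  toFun M := trSA ((e ⊗ₖ (1 : Matrix (Fin 2) (Fin 2) ℝ)) * assocReindex (ψ ⊗ₖ M))
  map_add' M N := by
    ext b b'
    simp [entry_formula, Matrix.add_apply, mul_add, Finset.sum_add_distrib]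
  map_smul' c M := by
    ext b b'
    simp [entry_formula, Matrix.smul_apply, Finset.mul_sum, mul_add, mul_left_comm, smul_eq_mul]

/-- **Proposition 11 of the paper (in real quantum theory):
tomographically-nonlocal entanglement is useless for teleportation.**
If the tomographically-local projection of a two-rebit state is separable,
then the teleportage induced by measuring any joint effect `e` on the input
system and the first rebit is a measure-and-prepare map. -/
theorem stmt13 (ρ : Matrix (Fin 2 × Fin 2) (Fin 2 × Fin 2) ℝ)
    (hρ : IsTwoRebitState ρ)
    (n : ℕ) (p : Fin n → ℝ) (A B : Fin n → Matrix (Fin 2) (Fin 2) ℝ)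
    (hp : ∀ k, 0 ≤ p k) (hps : (∑ k, p k) = 1)
    (hA : ∀ k, (A k).IsSymm ∧ (A k).PosSemidef ∧ (A k).trace = 1)
    (hB : ∀ k, (B k).IsSymm ∧ (B k).PosSemidef ∧ (B k).trace = 1)
    (hdec : PiTL ρ = ∑ k, p k • (A k ⊗ₖ B k))
    (e : Matrix (Fin 2 × Fin 2) (Fin 2 × Fin 2) ℝ) (he : e.IsSymm) :
    ∀ ψ : Matrix (Fin 2) (Fin 2) ℝ, ψ.IsSymm →
      trSA ((e ⊗ₖ (1 : Matrix (Fin 2) (Fin 2) ℝ)) * assocReindex (ψ ⊗ₖ ρ))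
        = ∑ k, (p k * (e * (ψ ⊗ₖ A k)).trace) • B k := by
  intro ψ hψ
  have hρeq : ρ = (∑ k, p k • (A k ⊗ₖ B k)) + ((1 / 4 : ℝ) * (ρ * Y₄).trace) • Y₄ := by
    rw [← hdec]; simp [PiTL]
  have key : trSA ((e ⊗ₖ (1 : Matrix (Fin 2) (Fin 2) ℝ)) * assocReindex (ψ ⊗ₖ ρ))
      = fmap e ψ ρ := rfl
  rw [key, hρeq, map_add, map_sum, _root_.map_smul]
  have h0 : fmap e ψ Y₄ = 0 := y_term e he ψ hψ
  rw [h0, smul_zero, add_zero]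
  apply Finset.sum_congr rfl
  intro k _
  rw [_root_.map_smul]
  have := sep_term e ψ (A k) (B k)
  show p k • fmap e ψ (A k ⊗ₖ B k) = _
  rw [show fmap e ψ (A k ⊗ₖ B k) = (e * (ψ ⊗ₖ A k)).trace • B k from this,
    smul_smul]
end

section
/- For a 4×4 real matrix M indexed by Fin 2 × Fin 2, define its partial transpose on the first factor by (M^{T_A})_{(i,j),(i',j')} := M_{(i',j),(i,j')}. Then for every real symmetric 4×4 matrix ρ: (1/2)·(ρ + ρ^{T_A}) = ρ − (1/4)·trace(ρ * Y₄) • Y₄; that is, averaging a two-rebit state with its partial transpose on one subsystem implements exactly the tomographically local projection Π_TL, removing the σ_y ⊗ σ_y component. -/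
open Matrix Kronecker

/-- Partial transpose on the first tensor factor:
(M^{T_A})_{(i,j),(i',j')} = M_{(i',j),(i,j')}. -/
noncomputable def ptA (M : Matrix (Fin 2 × Fin 2) (Fin 2 × Fin 2) ℝ) :
    Matrix (Fin 2 × Fin 2) (Fin 2 × Fin 2) ℝ :=
  Matrix.of fun p q => M (q.1, p.2) (p.1, q.2)

/-- **Appendix C of the paper.**
Averaging a real symmetric 4×4 matrix with its partial transpose on the first
factor implements exactly the tomographically local projection Π_TL, removing
the σ_y ⊗ σ_y component. -/
theorem stmt18 (ρ : Matrix (Fin 2 × Fin 2) (Fin 2 × Fin 2) ℝ) (hρ : ρ.IsSymm) :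
    (1 / 2 : ℝ) • (ρ + ptA ρ) = ρ - ((1 / 4 : ℝ) * (ρ * Y₄).trace) • Y₄ := by
  have h : ∀ a b, ρ b a = ρ a b := fun a b => congrFun (congrFun hρ a) b
  ext ⟨i, j⟩ ⟨k, l⟩
  fin_cases i <;> fin_cases j <;> fin_cases k <;> fin_cases l <;>
    simp [ptA, Y₄, y, Matrix.trace, Matrix.mul_apply, Fintype.sum_prod_type,
      Fin.sum_univ_two, Matrix.kroneckerMap_apply] <;>
    linarith [h (0,0) (1,0), h (0,0) (1,1), h (1,1) (0,0), h (0,1) (1,0), h (1,0) (0,1), h (0,1) (1,1),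
      h (1,1) (0,1), h (1,0) (0,0), h (0,0) (0,1), h (0,1) (0,0), h (1,1) (1,0), h (1,0) (1,1)]
end
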